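/- Let M be a real symmetric n×n matrix with spectral decomposition M = Σ_r θ_r E_r. For indices u ≠ v and time τ, equality |(e^{iτM})_{v,u}| = Σ_r |(E_r)_{v,u}| holds if and only if there exists a complex number γ such that e^{iτθ_r} = γ for every r with (E_r)_{v,u} > 0 and e^{iτθ_r} = -γ for every r with (E_r)_{v,u} < 0. -/

import Mathlib

lemma aux_ray {m : ℕ} (z : Fin m → ℂ)
    (h : ‖∑ r, z r‖ = ∑ r, ‖z r‖) (r : Fin m) :
    z r * ‖∑ s, z s‖ = ‖z r‖ * (∑ s, z s) := by
  set S := ∑ s, z s with hS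
  -- per-term real part inequality
  have key : ∀ t : Fin m, ((starRingEnd ℂ) S * z t).re ≤ ‖S‖ * ‖z t‖ := by
    intro t
    calc ((starRingEnd ℂ) S * z t).re ≤ ‖(starRingEnd ℂ) S * z t‖ := Complex.re_le_norm _
    _ = ‖S‖ * ‖z t‖ := by rw [norm_mul, Complex.norm_conj]
  have hsum : ∑ t, ((starRingEnd ℂ) S * z t).re = ∑ t, ‖S‖ * ‖z t‖ := by
    have : ((starRingEnd ℂ) S * S).re = ‖S‖ * ‖S‖ := by
      rw [mul_comm, Complex.mul_conj, Complex.ofReal_re, Complex.normSq_eq_norm_sq, sq]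
    calc ∑ t, ((starRingEnd ℂ) S * z t).re
        = ((starRingEnd ℂ) S * S).re := by
          rw [hS, Finset.mul_sum]; simp [Complex.re_sum]
      _ = ‖S‖ * ‖S‖ := this
      _ = ‖S‖ * ∑ t, ‖z t‖ := by rw [← h]
      _ = ∑ t, ‖S‖ * ‖z t‖ := by rw [Finset.mul_sum]
  have eqterm : ((starRingEnd ℂ) S * z r).re = ‖S‖ * ‖z r‖ := by
    by_contra hne
    have hlt : ((starRingEnd ℂ) S * z r).re < ‖S‖ * ‖z r‖ :=
      lt_of_le_of_ne (key r) hne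
    have := Finset.sum_lt_sum (fun t _ => key t) ⟨r, Finset.mem_univ r, hlt⟩
    rw [hsum] at this
    exact lt_irrefl _ this
  -- w has re = abs w, hence w real nonneg
  set w := (starRingEnd ℂ) S * z r with hw
  have habsw : ‖w‖ = ‖S‖ * ‖z r‖ := by
    rw [hw, norm_mul, Complex.norm_conj]
  have hre : w.re = ‖w‖ := by rw [habsw, eqterm]
  have him : w.im = 0 := by
    have h2 : ‖w‖ ^ 2 = w.re ^ 2 + w.im ^ 2 := by
      rw [Complex.sq_norm, Complex.normSq_apply]; ring
    have h3 : w.im ^ 2 = 0 := by rw [hre] at h2; linarith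
    exact pow_eq_zero_iff (by norm_num) |>.mp h3
  have hweq : w = (‖S‖ * ‖z r‖ : ℝ) := by
    apply Complex.ext <;> simp [eqterm, him]
  -- multiply by S
  have : S * w = S * (‖S‖ * ‖z r‖ : ℝ) := by rw [hweq]
  rw [hw, ← mul_assoc, Complex.mul_conj, ← Complex.sq_norm] at this
  push_cast at this
  -- this : (abs S)^2 * z r = S * (abs S * abs (z r))
  rcases eq_or_ne (‖S‖) 0 with h0 | h0
  · rw [norm_eq_zero.mp h0]
    simp
  · have hS0 : (‖S‖ : ℂ) ≠ 0 := by exact_mod_cast h0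
    apply mul_left_cancel₀ hS0
    linear_combination this

open Complex Matrix in
theorem stmt_1 {n m : ℕ} (θ : Fin m → ℝ) (hθ : Function.Injective θ)
    (E : Fin m → Matrix (Fin n) (Fin n) ℝ)
    (hsym : ∀ r, (E r)ᵀ = E r)
    (horth : ∀ r s, E r * E s = if r = s then E r else 0)
    (hsum : ∑ r, E r = 1)
    (M : Matrix (Fin n) (Fin n) ℝ)
    (hM : M = ∑ r, θ r • E r)
    (u v : Fin n) (huv : u ≠ v) (τ : ℝ) :
    ‖∑ r, Complex.exp (Complex.I * τ * θ r) * (E r v u : ℂ)‖ =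
        ∑ r, |E r v u| ↔
      ∃ γ : ℂ, ∀ r,
        (0 < E r v u → Complex.exp (Complex.I * τ * θ r) = γ) ∧
        (E r v u < 0 → Complex.exp (Complex.I * τ * θ r) = -γ) := by
  have hexp : ∀ r : Fin m, ‖Complex.exp (Complex.I * τ * θ r)‖ = 1 := by
    intro r
    have h1 : Complex.I * τ * θ r = ((τ * θ r : ℝ) : ℂ) * Complex.I := by push_cast; ring
    rw [h1, Complex.norm_exp_ofReal_mul_I]
  set z : Fin m → ℂ := fun r => Complex.exp (Complex.I * τ * θ r) * (E r v u : ℂ) with hz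
  have habsz : ∀ r, ‖z r‖ = |E r v u| := by
    intro r
    rw [hz]
    simp only [norm_mul, hexp r, Complex.norm_real, Real.norm_eq_abs, one_mul]
  constructor
  · intro h
    by_cases hall : ∀ r, E r v u = 0
    · exact ⟨0, fun r => ⟨fun hp => absurd (hall r) (ne_of_gt hp),
        fun hn => absurd (hall r) (ne_of_lt hn)⟩⟩
    · push_neg at hall
      obtain ⟨r0, hr0⟩ := hall
      have h' : ‖∑ s, z s‖ = ∑ s, ‖z s‖ := by
        rw [h]
        exact Finset.sum_congr rfl fun s _ => (habsz s).symm
      set S := ∑ s, z s with hS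
      have hpos : 0 < ∑ r, |E r v u| := by
        apply Finset.sum_pos' (fun r _ => abs_nonneg _)
        exact ⟨r0, Finset.mem_univ r0, abs_pos.mpr hr0⟩
      have habsS : ‖S‖ = ∑ r, |E r v u| := h
      have hSabsne : (‖S‖ : ℂ) ≠ 0 := by
        rw [habsS]
        exact_mod_cast ne_of_gt hpos
      refine ⟨S / ‖S‖, fun r => ⟨?_, ?_⟩⟩
      · intro hr
        have hray := aux_ray z h' r
        rw [habsz r, abs_of_pos hr] at hray
        have hene : (E r v u : ℂ) ≠ 0 := by exact_mod_cast ne_of_gt hr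
        rw [eq_div_iff hSabsne]
        apply mul_left_cancel₀ hene
        simp only [hz] at hray
        linear_combination hray
      · intro hr
        have hray := aux_ray z h' r
        rw [habsz r, abs_of_neg hr] at hray
        have hene : (E r v u : ℂ) ≠ 0 := by exact_mod_cast ne_of_lt hr
        rw [neg_div' ]
        rw [eq_div_iff hSabsne]
        apply mul_left_cancel₀ hene
        simp only [hz] at hray
        push_cast at hray
        linear_combination hray
  · rintro ⟨γ, hγ⟩
    by_cases hall : ∀ r, E r v u = 0
    · rw [Finset.sum_eq_zero fun r _ => by simp [hz, hall r]]
      simp [hall]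
    · push_neg at hall
      obtain ⟨r0, hr0⟩ := hall
      have hγ1 : ‖γ‖ = 1 := by
        rcases hr0.lt_or_gt with hlt | hgt
        · have he := (hγ r0).2 hlt
          have : ‖-γ‖ = 1 := by rw [← he]; exact hexp r0
          rwa [norm_neg] at this
        · have he := (hγ r0).1 hgt
          rw [← he]; exact hexp r0
      have hterm : ∀ r, z r = ((|E r v u| : ℝ) : ℂ) * γ := by
        intro r
        rcases lt_trichotomy (E r v u) 0 with hlt | heq | hgt
        · simp only [hz]
          rw [(hγ r).2 hlt, abs_of_neg hlt]
          push_cast; ring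
        · simp [hz, heq]
        · simp only [hz]
          rw [(hγ r).1 hgt, abs_of_pos hgt]
          ring
      calc ‖∑ r, z r‖
          = ‖(((∑ r, |E r v u| : ℝ)) : ℂ) * γ‖ := by
            rw [Finset.sum_congr rfl fun r _ => hterm r, ← Finset.sum_mul]
            push_cast
            ring_nf
        _ = ∑ r, |E r v u| := by
            rw [norm_mul, hγ1, mul_one, Complex.norm_real, Real.norm_eq_abs]
            exact abs_of_nonneg (Finset.sum_nonneg fun r _ => abs_nonneg _)
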